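/- A proper prime ideal P of 𝕂̃ is a minimal prime ideal (i.e., P contains no strictly smaller prime ideal) if and only if P is pure. -/

import Mathlib

noncomputable section

set_option maxHeartbeats 1000000
set_option synthInstance.maxHeartbeats 400000

open scoped Classical

/-- The index set `(0,1) ⊆ ℝ` of the nets. -/
abbrev Eps : Type := Set.Ioo (0:ℝ) 1

variable (K : Type) [RCLike K]

/-- A net `(x_ε)_{ε ∈ (0,1)}` is moderate if `|x_ε| ≤ ε^a` for some `a ∈ ℝ`,
for all sufficiently small `ε`. -/
def IsModerate (x : Eps → K) : Prop :=
  ∃ a : ℝ, ∃ ε₀ ∈ Set.Ioo (0:ℝ) 1, ∀ ε : Eps, (ε : ℝ) ≤ ε₀ → ‖x ε‖ ≤ (ε : ℝ) ^ a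

/-- A net `(x_ε)_{ε ∈ (0,1)}` is negligible if for every `a ∈ ℝ`, `|x_ε| ≤ ε^a`
for all sufficiently small `ε`. -/
def IsNegligible (x : Eps → K) : Prop :=
  ∀ a : ℝ, ∃ ε₀ ∈ Set.Ioo (0:ℝ) 1, ∀ ε : Eps, (ε : ℝ) ≤ ε₀ → ‖x ε‖ ≤ (ε : ℝ) ^ a

theorem rpow_two_bound {ε : ℝ} (h0 : 0 < ε) (h2 : ε ≤ 1/2) (a b : ℝ) :
    ε ^ a + ε ^ b ≤ ε ^ (min a b - 1) := by
  have h1 : ε ≤ 1 := h2.trans (by norm_num)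
  have ha : ε ^ a ≤ ε ^ min a b :=
    Real.rpow_le_rpow_of_exponent_ge h0 h1 (min_le_left a b)
  have hb : ε ^ b ≤ ε ^ min a b :=
    Real.rpow_le_rpow_of_exponent_ge h0 h1 (min_le_right a b)
  have key : 2 * ε ^ min a b ≤ ε ^ (min a b - 1) := by
    rw [Real.rpow_sub h0, Real.rpow_one, le_div_iff₀ h0]
    have hx : (0:ℝ) ≤ ε ^ min a b := (Real.rpow_pos_of_pos h0 _).le
    calc 2 * ε ^ min a b * ε ≤ 2 * ε ^ min a b * (1/2) := by
          apply mul_le_mul_of_nonneg_left h2 (by positivity)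
      _ = ε ^ min a b := by ring
  calc ε ^ a + ε ^ b ≤ 2 * ε ^ min a b := by linarith
    _ ≤ ε ^ (min a b - 1) := key

/-- The ring of moderate nets, as a subring of `K^{(0,1)}`. -/
def Moderate : Subring (Eps → K) where
  carrier := {x | IsModerate K x}
  zero_mem' := by
    refine ⟨0, 1/2, by constructor <;> norm_num, fun ε _ => ?_⟩
    simp [Real.rpow_zero]
  one_mem' := by
    refine ⟨0, 1/2, by constructor <;> norm_num, fun ε _ => ?_⟩
    simp [Real.rpow_zero]
  add_mem' := by
    rintro x y ⟨a, ε₀, h₀, ha⟩ ⟨b, ε₁, h₁, hb⟩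
    refine ⟨min a b - 1, min (min ε₀ ε₁) (1/2), ⟨lt_min (lt_min h₀.1 h₁.1) (by norm_num), ?_⟩,
      fun ε hε => ?_⟩
    · calc min (min ε₀ ε₁) (1/2) ≤ 1/2 := min_le_right _ _
        _ < 1 := by norm_num
    · have hε₀ : (ε:ℝ) ≤ ε₀ := le_trans hε (le_trans (min_le_left _ _) (min_le_left _ _))
      have hε₁ : (ε:ℝ) ≤ ε₁ := le_trans hε (le_trans (min_le_left _ _) (min_le_right _ _))
      have hε2 : (ε:ℝ) ≤ 1/2 := le_trans hε (min_le_right _ _)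
      calc ‖(x + y) ε‖ ≤ ‖x ε‖ + ‖y ε‖ := norm_add_le _ _
        _ ≤ (ε:ℝ) ^ a + (ε:ℝ) ^ b := add_le_add (ha ε hε₀) (hb ε hε₁)
        _ ≤ (ε:ℝ) ^ (min a b - 1) := rpow_two_bound ε.2.1 hε2 a b
  neg_mem' := by
    rintro x ⟨a, ε₀, h₀, ha⟩
    exact ⟨a, ε₀, h₀, fun ε hε => by simpa using ha ε hε⟩
  mul_mem' := by
    rintro x y ⟨a, ε₀, h₀, ha⟩ ⟨b, ε₁, h₁, hb⟩
    refine ⟨a + b, min ε₀ ε₁, ⟨lt_min h₀.1 h₁.1, lt_of_le_of_lt (min_le_left _ _) h₀.2⟩,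
      fun ε hε => ?_⟩
    have hε₀ : (ε:ℝ) ≤ ε₀ := le_trans hε (min_le_left _ _)
    have hε₁ : (ε:ℝ) ≤ ε₁ := le_trans hε (min_le_right _ _)
    calc ‖(x * y) ε‖ = ‖x ε‖ * ‖y ε‖ := norm_mul _ _
      _ ≤ (ε:ℝ) ^ a * (ε:ℝ) ^ b :=
        mul_le_mul (ha ε hε₀) (hb ε hε₁) (norm_nonneg _) (Real.rpow_pos_of_pos ε.2.1 _).le
      _ = (ε:ℝ) ^ (a + b) := (Real.rpow_add ε.2.1 _ _).symm

theorem mem_moderate {f : Eps → K} (h : IsModerate K f) : f ∈ Moderate K := h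

/-- The ideal of negligible nets in the ring of moderate nets. -/
def Negligible : Ideal (Moderate K) where
  carrier := {x | IsNegligible K (x : Eps → K)}
  zero_mem' := by
    intro a
    refine ⟨1/2, by constructor <;> norm_num, fun ε _ => ?_⟩
    have : (0:ℝ) ≤ (ε:ℝ) ^ a := (Real.rpow_pos_of_pos ε.2.1 _).le
    simpa using this
  add_mem' := by
    intro x y hx hy a
    obtain ⟨ε₀, h₀, ha⟩ := hx (a + 1)
    obtain ⟨ε₁, h₁, hb⟩ := hy (a + 1)
    refine ⟨min (min ε₀ ε₁) (1/2), ⟨lt_min (lt_min h₀.1 h₁.1) (by norm_num), ?_⟩, fun ε hε => ?_⟩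
    · calc min (min ε₀ ε₁) (1/2) ≤ 1/2 := min_le_right _ _
        _ < 1 := by norm_num
    · have hε₀ : (ε:ℝ) ≤ ε₀ := le_trans hε (le_trans (min_le_left _ _) (min_le_left _ _))
      have hε₁ : (ε:ℝ) ≤ ε₁ := le_trans hε (le_trans (min_le_left _ _) (min_le_right _ _))
      have hε2 : (ε:ℝ) ≤ 1/2 := le_trans hε (min_le_right _ _)
      have hbd := rpow_two_bound (ε := (ε:ℝ)) ε.2.1 hε2 (a+1) (a+1)
      simp only [min_self, add_sub_cancel_right] at hbd
      calc ‖((x + y : Moderate K) : Eps → K) ε‖ ≤ ‖(x : Eps → K) ε‖ + ‖(y : Eps → K) ε‖ := by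
            push_cast
            exact norm_add_le _ _
        _ ≤ (ε:ℝ) ^ (a+1) + (ε:ℝ) ^ (a+1) := add_le_add (ha ε hε₀) (hb ε hε₁)
        _ ≤ (ε:ℝ) ^ a := hbd
  smul_mem' := by
    intro c x hx
    show IsNegligible K ((c * x : Moderate K) : Eps → K)
    intro a
    obtain ⟨b, ε₀, h₀, hc⟩ := c.property
    obtain ⟨ε₁, h₁, hxa⟩ := hx (a - b)
    refine ⟨min ε₀ ε₁, ⟨lt_min h₀.1 h₁.1, lt_of_le_of_lt (min_le_left _ _) h₀.2⟩,
      fun ε hε => ?_⟩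
    have hε₀ : (ε:ℝ) ≤ ε₀ := le_trans hε (min_le_left _ _)
    have hε₁ : (ε:ℝ) ≤ ε₁ := le_trans hε (min_le_right _ _)
    calc ‖((c * x : Moderate K) : Eps → K) ε‖ = ‖(c : Eps → K) ε‖ * ‖(x : Eps → K) ε‖ := by
          push_cast
          exact norm_mul _ _
      _ ≤ (ε:ℝ) ^ b * (ε:ℝ) ^ (a - b) :=
        mul_le_mul (hc ε hε₀) (hxa ε hε₁) (norm_nonneg _) (Real.rpow_pos_of_pos ε.2.1 _).le
      _ = (ε:ℝ) ^ a := by rw [← Real.rpow_add ε.2.1]; ring_nf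

/-- The ring of Colombeau generalized numbers: the quotient of the ring of
moderate nets by the ideal of negligible nets. -/
abbrev CGen : Type := Moderate K ⧸ Negligible K

/-- The quotient map. -/
abbrev cmk : Moderate K →+* CGen K := Ideal.Quotient.mk (Negligible K)

/-- A canonical representative of a Colombeau generalized number. -/
def rep (x : CGen K) : Moderate K := (Ideal.Quotient.mk_surjective x).choose

theorem rep_spec (x : CGen K) : cmk K (rep K x) = x :=
  (Ideal.Quotient.mk_surjective x).choose_spec

theorem indicator_moderate (S : Set Eps) :
    IsModerate K (fun ε => if ε ∈ S then (1:K) else 0) := by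
  refine ⟨0, 1/2, by constructor <;> norm_num, fun ε _ => ?_⟩
  rw [Real.rpow_zero]
  by_cases h : ε ∈ S <;> simp [h]

/-- `e_S`: the generalized number given by the characteristic function of `S ⊆ (0,1)`. -/
def eS (S : Set Eps) : CGen K :=
  cmk K ⟨fun ε => if ε ∈ S then (1:K) else 0, mem_moderate K (indicator_moderate K S)⟩

theorem absNet_moderate (f : Moderate K) :
    IsModerate K (fun ε => ((‖(f : Eps → K) ε‖ : ℝ) : K)) := by
  obtain ⟨a, ε₀, h₀, h⟩ := f.property
  refine ⟨a, ε₀, h₀, fun ε hε => ?_⟩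
  simpa [RCLike.norm_ofReal, abs_norm] using h ε hε

/-- `|x|`: the class of the net `(|x_ε|)_ε` (for any representative of `x`). -/
def absC (x : CGen K) : CGen K :=
  cmk K ⟨_, mem_moderate K (absNet_moderate K (rep K x))⟩

theorem minNet_moderate (f g : Moderate K) :
    IsModerate K (fun ε => ((min ‖(f : Eps → K) ε‖ ‖(g : Eps → K) ε‖ : ℝ) : K)) := by
  obtain ⟨a, ε₀, h₀, h⟩ := f.property
  refine ⟨a, ε₀, h₀, fun ε hε => ?_⟩
  rw [RCLike.norm_ofReal, abs_of_nonneg (le_min (norm_nonneg _) (norm_nonneg _))]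
  exact le_trans (min_le_left _ _) (h ε hε)

/-- `|x| ∧ |y|`: the class of the pointwise minimum of `(|x_ε|)_ε` and `(|y_ε|)_ε`. -/
def infAbs (x y : CGen K) : CGen K :=
  cmk K ⟨_, mem_moderate K (minNet_moderate K (rep K x) (rep K y))⟩

theorem sqrtNet_moderate (f : Moderate K) :
    IsModerate K (fun ε => ((Real.sqrt ‖(f : Eps → K) ε‖ : ℝ) : K)) := by
  obtain ⟨a, ε₀, h₀, h⟩ := f.property
  refine ⟨a / 2, ε₀, h₀, fun ε hε => ?_⟩
  rw [RCLike.norm_ofReal, abs_of_nonneg (Real.sqrt_nonneg _)]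
  calc Real.sqrt ‖(f : Eps → K) ε‖ ≤ Real.sqrt ((ε:ℝ) ^ a) := Real.sqrt_le_sqrt (h ε hε)
    _ = (ε:ℝ) ^ (a / 2) := by
        rw [Real.sqrt_eq_rpow, ← Real.rpow_mul ε.2.1.le]
        ring_nf

/-- `√|x|`: the class of the net `(√|x_ε|)_ε` (for any representative of `x`). -/
def sqrtAbs (x : CGen K) : CGen K :=
  cmk K ⟨_, mem_moderate K (sqrtNet_moderate K (rep K x))⟩

/-- The annihilator `Ann(a) = {x : x·a = 0}` as an ideal. -/
def annIdeal (a : CGen K) : Ideal (CGen K) where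
  carrier := {x | x * a = 0}
  zero_mem' := by simp
  add_mem' := by
    intro x y hx hy
    show (x + y) * a = 0
    rw [add_mul, hx, hy, add_zero]
  smul_mem' := by
    intro c x hx
    show c * x * a = 0
    rw [mul_assoc, hx, mul_zero]

/-- The order relation on `𝕂̃`: `x ≤ y` iff there exist (real-valued) representatives
`(u_ε)_ε` of `x` and `(v_ε)_ε` of `y` with `u_ε ≤ v_ε` for all `ε`. -/
def leC (x y : CGen K) : Prop :=
  ∃ u v : Moderate K, cmk K u = x ∧ cmk K v = y ∧
    ∀ ε : Eps, ∃ r s : ℝ, (u : Eps → K) ε = (r : K) ∧ (v : Eps → K) ε = (s : K) ∧ r ≤ s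

/-- A z-ideal: if `b ∈ I` and `a` belongs to exactly the same maximal ideals as `b`,
then `a ∈ I`. -/
def IsZIdeal (I : Ideal (CGen K)) : Prop :=
  ∀ a b : CGen K, b ∈ I →
    (∀ M : Ideal (CGen K), M.IsMaximal → (a ∈ M ↔ b ∈ M)) → a ∈ I


/-- The Colombeau ring is reduced. -/
lemma cgen_isReduced : IsReduced (CGen K) := by
  constructor
  rintro x ⟨n, hn⟩
  rcases Nat.eq_zero_or_pos n with h0 | hpos
  · subst h0
    rw [pow_zero] at hn
    calc x = x * 1 := (mul_one x).symm
      _ = x * 0 := by rw [hn]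
      _ = 0 := mul_zero x
  · rw [← rep_spec K x]
    rw [← rep_spec K x, ← map_pow] at hn
    have hm : ((rep K x) ^ n : Moderate K) ∈ Negligible K :=
      (Ideal.Quotient.eq_zero_iff_mem).mp hn
    rw [Ideal.Quotient.eq_zero_iff_mem]
    show IsNegligible K _
    intro a
    obtain ⟨ε₀, h₀, hb⟩ := hm (a * n)
    refine ⟨ε₀, h₀, fun ε hε => ?_⟩
    have hval : ((((rep K x) ^ n : Moderate K)) : Eps → K) ε
        = ((rep K x : Eps → K) ε) ^ n := rfl
    have hbd := hb ε hε
    rw [hval, norm_pow] at hbd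
    have heq : ((ε:ℝ) ^ (a * n)) = ((ε:ℝ) ^ a) ^ n := by
      rw [← Real.rpow_natCast ((ε:ℝ) ^ a) n, ← Real.rpow_mul ε.2.1.le]
    rw [heq] at hbd
    exact (pow_le_pow_iff_left₀ (norm_nonneg _)
      (Real.rpow_pos_of_pos ε.2.1 _).le hpos.ne').mp hbd

/-- If the pointwise product of two moderate nets is negligible, then `u` times
the characteristic function of the set where `‖u‖ ≤ ‖w‖` is zero in `𝕂̃`. -/
lemma indic_kill (u w : Moderate K)
    (hneg : IsNegligible K fun ε => (u : Eps → K) ε * (w : Eps → K) ε)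
    (S : Set Eps) (hS : ∀ ε ∈ S, ‖(u : Eps → K) ε‖ ≤ ‖(w : Eps → K) ε‖) :
    cmk K u * eS K S = 0 := by
  have hmul : cmk K u * eS K S =
      cmk K (u * ⟨fun ε => if ε ∈ S then (1:K) else 0,
        mem_moderate K (indicator_moderate K S)⟩) := (map_mul _ _ _).symm
  rw [hmul, Ideal.Quotient.eq_zero_iff_mem]
  show IsNegligible K _
  intro a
  obtain ⟨ε₀, h₀, hb⟩ := hneg (2 * a)
  refine ⟨ε₀, h₀, fun ε hε => ?_⟩
  have hval : ((u * ⟨fun ε => if ε ∈ S then (1:K) else 0,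
      mem_moderate K (indicator_moderate K S)⟩ : Moderate K) : Eps → K) ε
      = (u : Eps → K) ε * (if ε ∈ S then (1:K) else 0) := rfl
  rw [hval]
  by_cases hmem : ε ∈ S
  · rw [if_pos hmem, mul_one]
    have h1 : ‖(u : Eps → K) ε‖ ^ 2 ≤ ((ε:ℝ) ^ a) ^ 2 := by
      calc ‖(u : Eps → K) ε‖ ^ 2 = ‖(u : Eps → K) ε‖ * ‖(u : Eps → K) ε‖ := sq _
        _ ≤ ‖(u : Eps → K) ε‖ * ‖(w : Eps → K) ε‖ :=
          mul_le_mul_of_nonneg_left (hS ε hmem) (norm_nonneg _)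
        _ = ‖(u : Eps → K) ε * (w : Eps → K) ε‖ := (norm_mul _ _).symm
        _ ≤ (ε:ℝ) ^ (2 * a) := hb ε hε
        _ = ((ε:ℝ) ^ a) ^ 2 := by
            rw [← Real.rpow_natCast ((ε:ℝ) ^ a) 2, ← Real.rpow_mul ε.2.1.le]
            norm_num [mul_comm]
    exact (pow_le_pow_iff_left₀ (norm_nonneg _)
      (Real.rpow_pos_of_pos ε.2.1 _).le two_ne_zero).mp h1
  · rw [if_neg hmem, mul_zero, norm_zero]
    exact (Real.rpow_pos_of_pos ε.2.1 _).le

/-- If `x * y = 0` in `𝕂̃`, there is an idempotent-type splitting: an element `e`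
with `x = x * e` and `y * e = 0`. -/
lemma split_zero (x y : CGen K) (h : x * y = 0) :
    ∃ e : CGen K, x = x * e ∧ y * e = 0 := by
  set u := rep K x with hu
  set v := rep K y with hv
  have hneg : IsNegligible K fun ε => (u : Eps → K) ε * (v : Eps → K) ε := by
    have h0 : cmk K (u * v) = 0 := by rw [map_mul, rep_spec, rep_spec]; exact h
    exact (Ideal.Quotient.eq_zero_iff_mem).mp h0
  set S : Set Eps := {ε | ‖(u : Eps → K) ε‖ ≤ ‖(v : Eps → K) ε‖} with hSdef
  have hx0 : x * eS K S = 0 := by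
    have := indic_kill K u v hneg S (fun ε hε => hε)
    rwa [rep_spec] at this
  have hy0 : y * eS K Sᶜ = 0 := by
    have hneg' : IsNegligible K fun ε => (v : Eps → K) ε * (u : Eps → K) ε := by
      intro a; obtain ⟨ε₀, h₀, hb⟩ := hneg a
      refine ⟨ε₀, h₀, fun ε hε => ?_⟩
      show ‖(v : Eps → K) ε * (u : Eps → K) ε‖ ≤ (ε:ℝ) ^ a
      rw [mul_comm]
      exact hb ε hε
    have := indic_kill K v u hneg' Sᶜ (fun ε hε => le_of_not_ge hε)
    rwa [rep_spec] at this
  have hsum : eS K S + eS K Sᶜ = (1 : CGen K) := by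
    show cmk K _ + cmk K _ = 1
    rw [← map_add, ← map_one (cmk K)]
    congr 1
    apply Subtype.ext
    funext ε
    simp only [Subring.coe_add, Pi.add_apply, OneMemClass.coe_one, Pi.one_apply]
    by_cases hmem : ε ∈ S <;> simp [hmem]
  refine ⟨eS K Sᶜ, ?_, hy0⟩
  calc x = x * (eS K S + eS K Sᶜ) := by rw [hsum, mul_one]
    _ = x * eS K S + x * eS K Sᶜ := mul_add _ _ _
    _ = x * eS K Sᶜ := by rw [hx0, zero_add]

/-- In a minimal prime, every element has a nontrivial annihilator. -/
lemma min_ann (P : Ideal (CGen K)) (hP : P.IsPrime)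
    (hmin : ∀ Q : Ideal (CGen K), Q.IsPrime → Q ≤ P → Q = P)
    (x : CGen K) (hx : x ∈ P) : ∃ s : CGen K, s ∉ P ∧ x * s = 0 := by
  haveI := hP
  have hMin : P ∈ minimalPrimes (CGen K) := by
    rw [minimalPrimes_eq_minimals]
    exact ⟨hP, fun Q hQ hle => (hmin Q hQ hle).ge⟩
  have hmem : algebraMap (CGen K) (Localization P.primeCompl) x ∈
      IsLocalRing.maximalIdeal (Localization P.primeCompl) :=
    (IsLocalization.AtPrime.to_map_mem_maximal_iff (Localization P.primeCompl) P x).mpr hx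
  obtain ⟨n, hn⟩ :=
    (by haveI : Ring.KrullDimLE 0 (Localization P.primeCompl) := .of_isLocalization _ hMin _
        exact Ring.KrullDimLE.isNilpotent_iff_mem_maximalIdeal.mpr hmem)
  rw [← map_pow, IsLocalization.map_eq_zero_iff P.primeCompl (Localization P.primeCompl)] at hn
  obtain ⟨s, hs⟩ := hn
  refine ⟨(s : CGen K), s.2, ?_⟩
  have hnil : (x * (s : CGen K)) ^ (n + 1) = 0 := by
    have hexp : (x * (s : CGen K)) ^ (n + 1)
        = x * (s : CGen K) ^ n * ((s : CGen K) * x ^ n) := by ring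
    rw [hexp, hs, mul_zero]
  exact (cgen_isReduced K).eq_zero _ ⟨n + 1, hnil⟩

/-- a proper prime ideal `P` of `𝕂̃` is a minimal prime iff it is pure. -/
theorem stmt6 (P : Ideal (CGen K)) (hP : P.IsPrime) :
    (∀ Q : Ideal (CGen K), Q.IsPrime → Q ≤ P → Q = P) ↔
    (∀ x ∈ P, ∃ y ∈ P, x = x * y) := by
  constructor
  · intro hmin x hx
    obtain ⟨s, hsP, hxs⟩ := min_ann K P hP hmin x hx
    obtain ⟨e, hxe, hse⟩ := split_zero K x s hxs
    refine ⟨e, ?_, hxe⟩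
    have hseP : s * e ∈ P := hse ▸ P.zero_mem
    rcases hP.mem_or_mem hseP with h | h
    · exact absurd h hsP
    · exact h
  · intro hpure Q hQ hle
    refine le_antisymm hle (fun x hx => ?_)
    obtain ⟨y, hyP, hxy⟩ := hpure x hx
    have h0 : x * (1 - y) = 0 := by rw [mul_sub, mul_one, ← hxy, sub_self]
    have h0Q : x * (1 - y) ∈ Q := h0 ▸ Q.zero_mem
    rcases hQ.mem_or_mem h0Q with h | h
    · exact h
    · exfalso
      apply hP.ne_top
      rw [Ideal.eq_top_iff_one]
      have : (1 - y) + y ∈ P := P.add_mem (hle h) hyP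
      simpa using this


end
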